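/- arXiv:1901.08186 — 2 statements merged into one kernel-verified Lean document; each statement's English description precedes it below -/
import Mathlib

section
/- Let K be an invertible self-dual ℓ×ℓ matrix over F_2 and let g* : [0,1] → ℝ satisfy g*(x) = g*(1-x) for all x ∈ [0,1]. Define h(z) = (1/ℓ) ∑_{i=1}^ℓ g*(f_i(z)) for z ∈ [0,1]. Then h(z) = h(1-z) for all z ∈ [0,1]. -/
/-- The support of a vector over `ZMod 2`. -/
def supp {ℓ : ℕ} (v : Fin ℓ → ZMod 2) : Set (Fin ℓ) := {j | v j ≠ 0}

/-- The Hamming weight of a vector over `ZMod 2`. -/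
def wt {ℓ : ℕ} (v : Fin ℓ → ZMod 2) : ℕ :=
  (Finset.univ.filter fun j => v j ≠ 0).card

/-- The kernel code `C_i`: the span of the rows `g_{i+1}, …, g_ℓ` of `K`
(rows of index `≥ i` in 0-based indexing). -/
def kernelCode {ℓ : ℕ} (K : Matrix (Fin ℓ) (Fin ℓ) (ZMod 2)) (i : ℕ) :
    Submodule (ZMod 2) (Fin ℓ → ZMod 2) :=
  Submodule.span (ZMod 2) {v | ∃ r : Fin ℓ, i ≤ (r : ℕ) ∧ v = K r}

/-- `e` is an uncorrectable erasure pattern for the bit-channel of (0-based) index `i`. -/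
def Uncorrectable {ℓ : ℕ} (K : Matrix (Fin ℓ) (Fin ℓ) (ZMod 2)) (i : Fin ℓ)
    (e : Fin ℓ → ZMod 2) : Prop :=
  ∃ u' u'' : Fin ℓ → ZMod 2,
    (∀ j, j < i → u' j = u'' j) ∧ u' i ≠ u'' i ∧
      ∀ j, e j = 0 → Matrix.vecMul u' K j = Matrix.vecMul u'' K j

/-- `E_{i,w}`: the number of uncorrectable erasure patterns of weight `w`
for bit-channel `i`. -/
noncomputable def Ecount {ℓ : ℕ} (K : Matrix (Fin ℓ) (Fin ℓ) (ZMod 2)) (i : Fin ℓ)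
    (w : ℕ) : ℕ :=
  Nat.card {e : Fin ℓ → ZMod 2 // Uncorrectable K i e ∧ wt e = w}

/-- `f_i(z) = ∑_{w=0}^{ℓ} E_{i,w} z^w (1-z)^{ℓ-w}`. -/
noncomputable def fpoly {ℓ : ℕ} (K : Matrix (Fin ℓ) (Fin ℓ) (ZMod 2)) (i : Fin ℓ)
    (z : ℝ) : ℝ :=
  ∑ w ∈ Finset.range (ℓ + 1), (Ecount K i w : ℝ) * z ^ w * (1 - z) ^ (ℓ - w)

/-- Dual code with respect to the standard bilinear form `⟨u,v⟩ = ∑ j, u j * v j`. -/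
def dualCode {ℓ : ℕ} (C : Submodule (ZMod 2) (Fin ℓ → ZMod 2)) :
    Submodule (ZMod 2) (Fin ℓ → ZMod 2) where
  carrier := {v | ∀ c ∈ C, ∑ j, v j * c j = 0}
  add_mem' := by
    intro a b ha hb c hc
    simpa [add_mul, Finset.sum_add_distrib] using by rw [ha c hc, hb c hc]; simp
  zero_mem' := by intro c hc; simp
  smul_mem' := by
    intro r a ha c hc
    simp only [Pi.smul_apply, smul_eq_mul, mul_assoc, ← Finset.mul_sum, Set.mem_setOf_eq]
    rw [ha c hc, mul_zero]

/-- `K` is self-dual if `C_i = C_{ℓ-i}^⊥` for all `0 ≤ i ≤ ℓ`. -/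
def SelfDual {ℓ : ℕ} (K : Matrix (Fin ℓ) (Fin ℓ) (ZMod 2)) : Prop :=
  ∀ i ≤ ℓ, kernelCode K i = dualCode (kernelCode K (ℓ - i))


def Vsub {ℓ : ℕ} (e : Fin ℓ → ZMod 2) : Submodule (ZMod 2) (Fin ℓ → ZMod 2) where
  carrier := {v | ∀ j, e j = 0 → v j = 0}
  add_mem' := by intro a b ha hb j hj; simp [ha j hj, hb j hj]
  zero_mem' := by intro j hj; rfl
  smul_mem' := by intro r a ha j hj; simp [ha j hj]

lemma mem_Vsub {ℓ : ℕ} {e v : Fin ℓ → ZMod 2} : v ∈ Vsub e ↔ ∀ j, e j = 0 → v j = 0 :=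
  Iff.rfl

lemma zmod2_eq_one {a : ZMod 2} (h : a ≠ 0) : a = 1 := by revert h; revert a; decide

lemma zmod2_add_self (a : ZMod 2) : a + a = 0 := by revert a; decide

lemma vec_add_self {ℓ : ℕ} (v : Fin ℓ → ZMod 2) : v + v = 0 := by
  ext j; exact zmod2_add_self (v j)

lemma vecMul_eq_sum' {ℓ : ℕ} (K : Matrix (Fin ℓ) (Fin ℓ) (ZMod 2)) (d : Fin ℓ → ZMod 2) :
    Matrix.vecMul d K = ∑ j, d j • K j := by
  ext k
  simp [Matrix.vecMul, dotProduct, Finset.sum_apply, mul_comm]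

lemma kernelCode_eq_span_range {ℓ : ℕ} (K : Matrix (Fin ℓ) (Fin ℓ) (ZMod 2)) (m : ℕ) :
    kernelCode K m
      = Submodule.span (ZMod 2) (Set.range fun r : {r : Fin ℓ // m ≤ (r : ℕ)} => K r.1) := by
  unfold kernelCode
  congr 1
  ext v
  constructor
  · rintro ⟨r, hr, rfl⟩; exact ⟨⟨r, hr⟩, rfl⟩
  · rintro ⟨⟨r, hr⟩, rfl⟩; exact ⟨r, hr, rfl⟩

lemma uncorrectable_iff {ℓ : ℕ} (K : Matrix (Fin ℓ) (Fin ℓ) (ZMod 2)) (i : Fin ℓ)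
    (e : Fin ℓ → ZMod 2) :
    Uncorrectable K i e ↔ K i ∈ kernelCode K ((i : ℕ) + 1) ⊔ Vsub e := by
  constructor
  · rintro ⟨u', u'', hlt, hne, herase⟩
    set d : Fin ℓ → ZMod 2 := u' + u'' with hd
    have hdj : ∀ j, j < i → d j = 0 := by
      intro j hj; simp [hd, hlt j hj, zmod2_add_self]
    have hdi : d i = 1 := by
      apply zmod2_eq_one
      intro h
      apply hne
      have h2 : u' i + u'' i = 0 := h
      have := congrArg (· + u'' i) h2
      simpa [add_assoc, zmod2_add_self] using this
    have hsplit : Matrix.vecMul d K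
        = K i + ∑ j ∈ Finset.univ.filter (fun j : Fin ℓ => (i:ℕ)+1 ≤ (j:ℕ)), d j • K j := by
      rw [vecMul_eq_sum']
      rw [← Finset.sum_filter_add_sum_filter_not Finset.univ (fun j : Fin ℓ => (i:ℕ)+1 ≤ (j:ℕ))]
      rw [add_comm]
      congr 1
      have hset : Finset.univ.filter (fun j : Fin ℓ => ¬ ((i:ℕ)+1 ≤ (j:ℕ)))
          = {i} ∪ Finset.univ.filter (fun j : Fin ℓ => j < i) := by
        ext j
        simp only [Finset.mem_filter, Finset.mem_univ, true_and, Finset.mem_union,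
          Finset.mem_singleton, not_le, Fin.lt_def]
        constructor
        · intro h
          rcases lt_or_eq_of_le (Nat.lt_succ_iff.mp h) with h' | h'
          · exact Or.inr h'
          · exact Or.inl (Fin.ext h')
        · rintro (rfl | h) <;> omega
      rw [hset, Finset.sum_union]
      · have h1 : ∑ j ∈ ({i} : Finset (Fin ℓ)), d j • K j = K i := by simp [hdi]
        have h2 : ∑ j ∈ Finset.univ.filter (fun j : Fin ℓ => j < i), d j • K j = 0 := by
          apply Finset.sum_eq_zero
          intro j hj
          simp only [Finset.mem_filter] at hj
          simp [hdj j hj.2]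
        rw [h1, h2, add_zero]
      · simp [Finset.disjoint_singleton_left, lt_irrefl]
    have hmem1 : ∑ j ∈ Finset.univ.filter (fun j : Fin ℓ => (i:ℕ)+1 ≤ (j:ℕ)), d j • K j
        ∈ kernelCode K ((i:ℕ)+1) := by
      apply Submodule.sum_mem
      intro j hj
      simp only [Finset.mem_filter] at hj
      exact Submodule.smul_mem _ _ (Submodule.subset_span ⟨j, hj.2, rfl⟩)
    have hmem2 : Matrix.vecMul d K ∈ Vsub e := by
      intro j hj
      show Matrix.vecMul (u' + u'') K j = 0
      rw [Matrix.add_vecMul]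
      show Matrix.vecMul u' K j + Matrix.vecMul u'' K j = 0
      rw [herase j hj]; exact zmod2_add_self _
    have hKi : K i = (∑ j ∈ Finset.univ.filter (fun j : Fin ℓ => (i:ℕ)+1 ≤ (j:ℕ)), d j • K j)
        + Matrix.vecMul d K := by
      rw [hsplit]
      rw [show ∀ x y : Fin ℓ → ZMod 2, x + (y + x) = y + (x + x) from fun x y => by abel]
      rw [vec_add_self, add_zero]
    rw [hKi]
    exact Submodule.add_mem_sup hmem1 hmem2
  · intro h
    rw [Submodule.mem_sup] at h
    obtain ⟨a, ha, s, hs, hsum⟩ := h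
    rw [kernelCode_eq_span_range, Submodule.mem_span_range_iff_exists_fun] at ha
    obtain ⟨c, hc⟩ := ha
    set d : Fin ℓ → ZMod 2 := fun j => if h : (i:ℕ)+1 ≤ (j:ℕ) then c ⟨j, h⟩ else 0 with hd
    have hvd : Matrix.vecMul d K = a := by
      rw [vecMul_eq_sum']
      rw [← hc]
      rw [← Finset.sum_filter_add_sum_filter_not Finset.univ (fun j : Fin ℓ => (i:ℕ)+1 ≤ (j:ℕ))]
      have h2 : ∑ j ∈ Finset.univ.filter (fun j : Fin ℓ => ¬((i:ℕ)+1 ≤ (j:ℕ))), d j • K j = 0 := by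
        apply Finset.sum_eq_zero
        intro j hj
        simp only [Finset.mem_filter] at hj
        simp only [hd, dif_neg hj.2, zero_smul]
      rw [h2, add_zero]
      rw [Finset.sum_subtype (Finset.univ.filter (fun j : Fin ℓ => (i:ℕ)+1 ≤ (j:ℕ)))
        (p := fun j : Fin ℓ => (i:ℕ)+1 ≤ (j:ℕ)) (by simp)]
      apply Finset.sum_congr rfl
      rintro ⟨j, hj⟩ _
      simp only [hd, dif_pos hj]
    refine ⟨Pi.single i 1 + d, 0, ?_, ?_, ?_⟩
    · intro j hj
      have h1 : Pi.single (M := fun _ : Fin ℓ => ZMod 2) i 1 j = 0 :=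
        Pi.single_eq_of_ne (ne_of_lt hj) 1
      have h2 : d j = 0 := by
        rw [hd]; have : ¬((i:ℕ)+1 ≤ (j:ℕ)) := by
          have := (Fin.lt_def.mp hj); omega
        simp only [dif_neg this]
      simp only [Pi.add_apply, Pi.zero_apply, h1, h2, add_zero]
    · have h2 : d i = 0 := by
        rw [hd]; simp
      simp only [Pi.add_apply, Pi.zero_apply, h2, Pi.single_eq_same, add_zero]
      exact one_ne_zero
    · intro j hj
      rw [Matrix.add_vecMul, Matrix.zero_vecMul]
      have hsing : Matrix.vecMul (Pi.single i 1) K = K i := by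
        ext k
        simp [Matrix.vecMul, dotProduct, Pi.single_apply]
      rw [hsing, hvd]
      show (K i + a) j = 0
      have : K i + a = s := by
        rw [← hsum]
        rw [show a + s + a = s + (a + a) from by abel]
        simp [vec_add_self]
      rw [this]
      exact hs j hj

/-- The standard pairing as a linear map in the second argument. -/
def pairL {ℓ : ℕ} (v : Fin ℓ → ZMod 2) : (Fin ℓ → ZMod 2) →ₗ[ZMod 2] ZMod 2 where
  toFun := fun c => ∑ j, v j * c j
  map_add' := by intro a b; simp [mul_add, Finset.sum_add_distrib]
  map_smul' := by intro r a; simp [Finset.mul_sum, mul_left_comm]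

lemma mem_dualCode {ℓ : ℕ} {C : Submodule (ZMod 2) (Fin ℓ → ZMod 2)}
    {v : Fin ℓ → ZMod 2} : v ∈ dualCode C ↔ ∀ c ∈ C, ∑ j, v j * c j = 0 := Iff.rfl

lemma mem_kernelCode_self {ℓ : ℕ} (K : Matrix (Fin ℓ) (Fin ℓ) (ZMod 2)) (i : Fin ℓ) :
    K i ∈ kernelCode K (i : ℕ) :=
  Submodule.subset_span ⟨i, le_refl _, rfl⟩

lemma kernelCode_mono {ℓ : ℕ} (K : Matrix (Fin ℓ) (Fin ℓ) (ZMod 2)) {m m' : ℕ}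
    (h : m ≤ m') : kernelCode K m' ≤ kernelCode K m :=
  Submodule.span_mono (by rintro v ⟨r, hr, rfl⟩; exact ⟨r, le_trans h hr, rfl⟩)

lemma kernelCode_succ {ℓ : ℕ} (K : Matrix (Fin ℓ) (Fin ℓ) (ZMod 2)) (i : Fin ℓ) :
    kernelCode K (i : ℕ)
      = Submodule.span (ZMod 2) {K i} ⊔ kernelCode K ((i : ℕ) + 1) := by
  unfold kernelCode
  rw [← Submodule.span_union]
  congr 1
  ext v
  constructor
  · rintro ⟨r, hr, rfl⟩
    rcases lt_or_eq_of_le hr with h' | h'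
    · exact Or.inr ⟨r, h', rfl⟩
    · exact Or.inl (by rw [show i = r from Fin.ext h']; rfl)
  · rintro (h | ⟨r, hr, rfl⟩)
    · exact ⟨i, le_refl _, h⟩
    · exact ⟨r, by omega, rfl⟩

lemma not_mem_kernelCode_succ {ℓ : ℕ} {K : Matrix (Fin ℓ) (Fin ℓ) (ZMod 2)}
    (hK : IsUnit K.det) (i : Fin ℓ) : K i ∉ kernelCode K ((i : ℕ) + 1) := by
  have hli : LinearIndependent (ZMod 2) (fun r => K r) :=
    Matrix.linearIndependent_rows_iff_isUnit.mpr ((Matrix.isUnit_iff_isUnit_det K).mpr hK)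
  have hset : kernelCode K ((i : ℕ) + 1)
      = Submodule.span (ZMod 2) ((fun r => K r) '' {r : Fin ℓ | (i : ℕ) + 1 ≤ (r : ℕ)}) := by
    unfold kernelCode
    congr 1
    ext v
    constructor
    · rintro ⟨r, hr, rfl⟩; exact ⟨r, hr, rfl⟩
    · rintro ⟨r, hr, rfl⟩; exact ⟨r, hr, rfl⟩
  rw [hset]
  exact LinearIndependent.notMem_span_image hli (by simp)

lemma pair_single {ℓ : ℕ} (f : (Fin ℓ → ZMod 2) →ₗ[ZMod 2] ZMod 2)
    (w : Fin ℓ → ZMod 2) : ∑ j, f (Pi.single j 1) * w j = f w := by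
  have hP : ∀ j, Pi.single (M := fun _ : Fin ℓ => ZMod 2) j (w j) = w j • Pi.single j 1 := by
    intro j
    ext k
    by_cases hk : k = j
    · subst hk; simp
    · simp [Pi.single_eq_of_ne hk]
  have : f w = ∑ j, w j * f (Pi.single j 1) := by
    conv_lhs => rw [← Finset.univ_sum_single w]
    rw [map_sum]
    refine Finset.sum_congr rfl fun j _ => ?_
    rw [hP j, map_smul, smul_eq_mul]
  rw [this]
  exact Finset.sum_congr rfl fun j _ => mul_comm _ _

/-- Separating vector for the standard pairing. -/
lemma exists_separating {ℓ : ℕ} (W : Submodule (ZMod 2) (Fin ℓ → ZMod 2))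
    {g : Fin ℓ → ZMod 2} (hg : g ∉ W) :
    ∃ c' : Fin ℓ → ZMod 2, (∀ w ∈ W, ∑ j, c' j * w j = 0) ∧ ∑ j, c' j * g j = 1 := by
  obtain ⟨f, hfg, hfW⟩ := W.exists_dual_map_eq_bot_of_notMem hg inferInstance
  refine ⟨fun j => f (Pi.single j 1), ?_, ?_⟩
  · intro w hw
    rw [pair_single]
    exact (Submodule.eq_bot_iff _).mp hfW (f w) ⟨w, hw, rfl⟩
  · rw [pair_single]
    exact zmod2_eq_one hfg

lemma zmod2_cases (a : ZMod 2) : a = 0 ∨ a = 1 := by revert a; decide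

lemma dualA {ℓ : ℕ} {K : Matrix (Fin ℓ) (Fin ℓ) (ZMod 2)} (hsd : SelfDual K)
    (i : Fin ℓ) :
    kernelCode K (ℓ - ((i : ℕ) + 1)) = dualCode (kernelCode K ((i : ℕ) + 1)) := by
  have hi := i.isLt
  have := hsd (ℓ - ((i : ℕ) + 1)) (by omega)
  rwa [show ℓ - (ℓ - ((i : ℕ) + 1)) = (i : ℕ) + 1 from by omega] at this

lemma dualB {ℓ : ℕ} {K : Matrix (Fin ℓ) (Fin ℓ) (ZMod 2)} (hsd : SelfDual K)
    (i : Fin ℓ) :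
    kernelCode K (ℓ - (i : ℕ)) = dualCode (kernelCode K (i : ℕ)) := by
  have hi := i.isLt
  have := hsd (ℓ - (i : ℕ)) (by omega)
  rwa [show ℓ - (ℓ - (i : ℕ)) = (i : ℕ) from by omega] at this

lemma pairing_rev {ℓ : ℕ} {K : Matrix (Fin ℓ) (Fin ℓ) (ZMod 2)} (hK : IsUnit K.det)
    (hsd : SelfDual K) (i : Fin ℓ) :
    ∑ j, K (Fin.rev i) j * K i j = 1 := by
  have hi := i.isLt
  have hrev : (Fin.rev i : ℕ) = ℓ - ((i : ℕ) + 1) := rfl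
  by_contra h
  have h0 : ∑ j, K (Fin.rev i) j * K i j = 0 := by
    rcases zmod2_cases (∑ j, K (Fin.rev i) j * K i j) with h' | h'
    · exact h'
    · exact absurd h' h
  have hdualsucc : K (Fin.rev i) ∈ dualCode (kernelCode K ((i : ℕ) + 1)) := by
    rw [← dualA hsd i, ← hrev]
    exact mem_kernelCode_self K (Fin.rev i)
  have hker : kernelCode K (i : ℕ) ≤ LinearMap.ker (pairL (K (Fin.rev i))) := by
    rw [kernelCode_succ K i, sup_le_iff]
    constructor
    · rw [Submodule.span_le, Set.singleton_subset_iff]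
      exact h0
    · intro c hc
      exact hdualsucc c hc
  have : K (Fin.rev i) ∈ kernelCode K (ℓ - (i : ℕ)) := by
    rw [dualB hsd i]
    intro c hc
    exact hker hc
  have heq : ℓ - (i : ℕ) = (Fin.rev i : ℕ) + 1 := by rw [hrev]; omega
  rw [heq] at this
  exact not_mem_kernelCode_succ hK (Fin.rev i) this

lemma pair_add_left {ℓ : ℕ} (x y c : Fin ℓ → ZMod 2) :
    ∑ j, (x + y) j * c j = (∑ j, x j * c j) + ∑ j, y j * c j := by
  simp [add_mul, Finset.sum_add_distrib]

lemma pair_disjoint {ℓ : ℕ} {e s s' : Fin ℓ → ZMod 2} (hs : s ∈ Vsub e)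
    (hs' : s' ∈ Vsub (fun j => 1 + e j)) : ∑ j, s' j * s j = 0 := by
  apply Finset.sum_eq_zero
  intro j _
  by_cases hj : e j = 0
  · rw [hs j hj, mul_zero]
  · have h1 : e j = 1 := zmod2_eq_one hj
    have : (1 : ZMod 2) + e j = 0 := by rw [h1]; decide
    rw [hs' j this, zero_mul]

lemma uncorr_rev {ℓ : ℕ} {K : Matrix (Fin ℓ) (Fin ℓ) (ZMod 2)} (hK : IsUnit K.det)
    (hsd : SelfDual K) (i : Fin ℓ) (e : Fin ℓ → ZMod 2) :
    Uncorrectable K (Fin.rev i) (fun j => 1 + e j) ↔ ¬ Uncorrectable K i e := by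
  have hi := i.isLt
  have hrev : (Fin.rev i : ℕ) = ℓ - ((i : ℕ) + 1) := rfl
  have heq : ℓ - (i : ℕ) = (Fin.rev i : ℕ) + 1 := by rw [hrev]; omega
  constructor
  · -- not both
    intro h2 h1
    rw [uncorrectable_iff] at h1 h2
    rw [Submodule.mem_sup] at h1 h2
    obtain ⟨a, ha, s, hs, hsum⟩ := h1
    obtain ⟨a', ha', s', hs', hsum'⟩ := h2
    have ha'B : a' ∈ dualCode (kernelCode K (i : ℕ)) := by
      rw [← dualB hsd i, heq]; exact ha'
    have hs'A : s' ∈ dualCode (kernelCode K ((i : ℕ) + 1)) := by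
      rw [← dualA hsd i]
      have h1' : K (Fin.rev i) ∈ kernelCode K (ℓ - ((i:ℕ)+1)) := by
        rw [← hrev]; exact mem_kernelCode_self K (Fin.rev i)
      have h2' : a' ∈ kernelCode K (ℓ - ((i:ℕ)+1)) := by
        apply kernelCode_mono K (show ℓ - ((i:ℕ)+1) ≤ (Fin.rev i : ℕ) + 1 from by omega)
        exact ha'
      have : s' = K (Fin.rev i) + a' := by
        rw [← hsum']
        rw [show a' + s' + a' = s' + (a' + a') from by abel, vec_add_self, add_zero]
      rw [this]
      exact Submodule.add_mem _ h1' h2'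
    have h1 : ∑ j, K (Fin.rev i) j * K i j = 1 := pairing_rev hK hsd i
    have h2 : ∑ j, K (Fin.rev i) j * K i j = 0 := by
      rw [← hsum', pair_add_left]
      have hterm1 : ∑ j, a' j * K i j = 0 := ha'B (K i) (mem_kernelCode_self K i)
      have hterm2 : ∑ j, s' j * K i j = 0 := by
        have : (K i : Fin ℓ → ZMod 2) = a + s := hsum.symm
        rw [this]
        have e1 : ∑ j, s' j * (a + s) j = (∑ j, s' j * a j) + ∑ j, s' j * s j := by
          simp [mul_add, Finset.sum_add_distrib]
        rw [e1, hs'A a ha, pair_disjoint hs hs', add_zero]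
      rw [hterm1, hterm2, add_zero]
    rw [h1] at h2
    exact one_ne_zero h2
  · -- separating vector direction
    intro h
    rw [uncorrectable_iff] at h ⊢
    obtain ⟨c', hc'W, hc'g⟩ := exists_separating _ h
    have hc'A : c' ∈ dualCode (kernelCode K ((i : ℕ) + 1)) :=
      fun c hc => hc'W c (Submodule.mem_sup_left hc)
    have hc'k : c' ∈ kernelCode K ((Fin.rev i : ℕ)) := by
      rw [hrev, dualA hsd i]; exact hc'A
    have hc'V : c' ∈ Vsub (fun j => 1 + e j) := by
      intro j hj
      have hej : e j = 1 := by
        have : ∀ a : ZMod 2, 1 + a = 0 → a = 1 := by decide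
        exact this _ hj
      have hsing : Pi.single j 1 ∈ Vsub e := by
        intro k hk
        have : k ≠ j := fun hkj => by rw [hkj, hej] at hk; exact one_ne_zero hk
        exact Pi.single_eq_of_ne this 1
      have := hc'W _ (Submodule.mem_sup_right hsing)
      simpa [Pi.single_apply, mul_ite] using this
    rw [kernelCode_succ K (Fin.rev i), Submodule.mem_sup] at hc'k
    obtain ⟨x, hx, a', ha', hsum⟩ := hc'k
    rw [Submodule.mem_span_singleton] at hx
    obtain ⟨t, rfl⟩ := hx
    have ht : t = 1 := by
      rcases zmod2_cases t with h0 | h1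
      · exfalso
        rw [h0, zero_smul, zero_add] at hsum
        have : c' ∈ dualCode (kernelCode K (i : ℕ)) := by
          rw [← dualB hsd i, heq, ← hsum]; exact ha'
        have := this (K i) (mem_kernelCode_self K i)
        rw [hc'g] at this
        exact one_ne_zero this
      · exact h1
    rw [ht, one_smul] at hsum
    rw [Submodule.mem_sup]
    refine ⟨a', ha', c', hc'V, ?_⟩
    rw [← hsum]
    rw [show a' + (K (Fin.rev i) + a') = K (Fin.rev i) + (a' + a') from by abel]
    rw [vec_add_self, add_zero]

lemma compl_compl' {ℓ : ℕ} (e : Fin ℓ → ZMod 2) :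
    (fun j => 1 + (1 + e j)) = e := by
  funext j
  have : ∀ a : ZMod 2, 1 + (1 + a) = a := by decide
  exact this (e j)

lemma wt_compl {ℓ : ℕ} (e : Fin ℓ → ZMod 2) :
    wt (fun j => 1 + e j) = ℓ - wt e := by
  show (Finset.univ.filter fun j : Fin ℓ => 1 + e j ≠ 0).card = ℓ - wt e
  have h1 : (Finset.univ.filter fun j : Fin ℓ => 1 + e j ≠ 0)
      = (Finset.univ.filter fun j : Fin ℓ => e j ≠ 0)ᶜ := by
    ext j
    have : ∀ a : ZMod 2, (1 + a ≠ 0) ↔ ¬ (a ≠ 0) := by decide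
    simp only [Finset.mem_filter, Finset.mem_univ, true_and, Finset.mem_compl]
    exact this (e j)
  rw [h1, Finset.card_compl, Fintype.card_fin]
  rfl

lemma wt_le {ℓ : ℕ} (e : Fin ℓ → ZMod 2) : wt e ≤ ℓ := by
  unfold wt
  simpa using Finset.card_filter_le Finset.univ (fun j => e j ≠ 0)

open Classical in
lemma Ecount_eq_filter {ℓ : ℕ} (K : Matrix (Fin ℓ) (Fin ℓ) (ZMod 2)) (i : Fin ℓ) (w : ℕ) :
    Ecount K i w
      = (Finset.univ.filter fun e : Fin ℓ → ZMod 2 => Uncorrectable K i e ∧ wt e = w).card := by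
  rw [Ecount, Nat.card_eq_fintype_card, Fintype.card_subtype]

open Classical in
lemma card_wt_filter {ℓ : ℕ} (w : ℕ) :
    ((Finset.univ : Finset (Fin ℓ → ZMod 2)).filter fun e => wt e = w).card
      = Nat.choose ℓ w := by
  have hequiv : {e : Fin ℓ → ZMod 2 // wt e = w} ≃ {s : Finset (Fin ℓ) // s.card = w} := by
    refine ⟨fun e => ⟨Finset.univ.filter fun j => e.1 j ≠ 0, e.2⟩,
      fun s => ⟨fun j => if j ∈ s.1 then 1 else 0, ?_⟩, ?_, ?_⟩
    · have hf : (Finset.univ.filter fun j => (if j ∈ s.1 then (1 : ZMod 2) else 0) ≠ 0)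
          = s.1 := by
        ext j
        by_cases hj : j ∈ s.1 <;> simp [hj]
      show (Finset.univ.filter fun j => (if j ∈ s.1 then (1 : ZMod 2) else 0) ≠ 0).card = w
      rw [hf, s.2]
    · rintro ⟨e, he⟩
      ext j
      simp only
      by_cases hj : e j ≠ 0
      · simp [hj, (zmod2_eq_one hj).symm]
      · simp only [not_not] at hj
        simp [hj]
    · rintro ⟨s, hs⟩
      ext j
      simp only [Finset.mem_filter, Finset.mem_univ, true_and]
      by_cases hj : j ∈ s <;> simp [hj]
  have hcard : Fintype.card {e : Fin ℓ → ZMod 2 // wt e = w} = Nat.choose ℓ w := by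
    rw [Fintype.card_congr hequiv, Fintype.card_finset_len, Fintype.card_fin]
  rw [← hcard, Fintype.card_subtype]

lemma Ecount_compl {ℓ : ℕ} {K : Matrix (Fin ℓ) (Fin ℓ) (ZMod 2)} (hK : IsUnit K.det)
    (hsd : SelfDual K) (i : Fin ℓ) {w : ℕ} (hw : w ≤ ℓ) :
    Ecount K i w + Ecount K (Fin.rev i) (ℓ - w) = Nat.choose ℓ w := by
  classical
  rw [Ecount_eq_filter, Ecount_eq_filter]
  have hbij : (Finset.univ.filter fun e : Fin ℓ → ZMod 2 => Uncorrectable K i e ∧ wt e = w).card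
      = (Finset.univ.filter fun e : Fin ℓ → ZMod 2 =>
          ¬ Uncorrectable K (Fin.rev i) e ∧ wt e = ℓ - w).card := by
    apply Finset.card_bij' (fun e _ => fun j => 1 + e j) (fun e _ => fun j => 1 + e j)
      (fun e he => ?_) (fun e he => ?_) (fun e _ => compl_compl' e) (fun e _ => compl_compl' e)
    · simp only [Finset.mem_filter, Finset.mem_univ, true_and] at he ⊢
      constructor
      · rw [uncorr_rev hK hsd i e]
        simp [he.1]
      · rw [wt_compl, he.2]
    · simp only [Finset.mem_filter, Finset.mem_univ, true_and] at he ⊢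
      constructor
      · have h := uncorr_rev hK hsd (Fin.rev i) e
        rw [Fin.rev_rev] at h
        exact h.mpr he.1
      · rw [wt_compl, he.2]
        omega
  rw [hbij]
  have hsplit := Finset.card_filter_add_card_filter_not
    (s := (Finset.univ : Finset (Fin ℓ → ZMod 2)).filter fun e => wt e = ℓ - w)
    (p := fun e => Uncorrectable K (Fin.rev i) e)
  rw [card_wt_filter, Nat.choose_symm hw] at hsplit
  rw [Finset.filter_filter, Finset.filter_filter] at hsplit
  have h1 : (Finset.univ.filter fun e : Fin ℓ → ZMod 2 =>
      ¬ Uncorrectable K (Fin.rev i) e ∧ wt e = ℓ - w)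
      = (Finset.univ.filter fun e : Fin ℓ → ZMod 2 =>
          wt e = ℓ - w ∧ ¬ Uncorrectable K (Fin.rev i) e) := by
    apply Finset.filter_congr
    intro e _
    exact and_comm
  have h2 : (Finset.univ.filter fun e : Fin ℓ → ZMod 2 =>
      Uncorrectable K (Fin.rev i) e ∧ wt e = ℓ - w)
      = (Finset.univ.filter fun e : Fin ℓ → ZMod 2 =>
          wt e = ℓ - w ∧ Uncorrectable K (Fin.rev i) e) := by
    apply Finset.filter_congr
    intro e _
    exact and_comm
  rw [h1, h2]
  omega

lemma sum_binom {ℓ : ℕ} (z : ℝ) :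
    ∑ w ∈ Finset.range (ℓ + 1), (Nat.choose ℓ w : ℝ) * z ^ w * (1 - z) ^ (ℓ - w) = 1 := by
  have h := add_pow z (1 - z) ℓ
  rw [show z + (1 - z) = 1 from by ring, one_pow] at h
  rw [show ∑ w ∈ Finset.range (ℓ + 1), (Nat.choose ℓ w : ℝ) * z ^ w * (1 - z) ^ (ℓ - w)
    = ∑ w ∈ Finset.range (ℓ + 1), z ^ w * (1 - z) ^ (ℓ - w) * (Nat.choose ℓ w : ℝ) from
    Finset.sum_congr rfl fun w _ => by ring]
  exact h.symm

lemma Ecount_le {ℓ : ℕ} {K : Matrix (Fin ℓ) (Fin ℓ) (ZMod 2)} (hK : IsUnit K.det)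
    (hsd : SelfDual K) (i : Fin ℓ) {w : ℕ} (hw : w ≤ ℓ) :
    Ecount K i w ≤ Nat.choose ℓ w := by
  have := Ecount_compl hK hsd i hw
  omega

lemma fpoly_mem {ℓ : ℕ} {K : Matrix (Fin ℓ) (Fin ℓ) (ZMod 2)} (hK : IsUnit K.det)
    (hsd : SelfDual K) (i : Fin ℓ) {z : ℝ} (hz : z ∈ Set.Icc (0 : ℝ) 1) :
    fpoly K i z ∈ Set.Icc (0 : ℝ) 1 := by
  obtain ⟨hz0, hz1⟩ := hz
  have hterm : ∀ w, 0 ≤ z ^ w * (1 - z) ^ (ℓ - w) :=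
    fun w => mul_nonneg (pow_nonneg hz0 w) (pow_nonneg (by linarith) (ℓ - w))
  constructor
  · apply Finset.sum_nonneg
    intro w _
    rw [mul_assoc]
    exact mul_nonneg (Nat.cast_nonneg _) (hterm w)
  · rw [← sum_binom (ℓ := ℓ) z]
    apply Finset.sum_le_sum
    intro w hw
    rw [mul_assoc, mul_assoc]
    apply mul_le_mul_of_nonneg_right _ (hterm w)
    exact_mod_cast Ecount_le hK hsd i (Nat.lt_succ_iff.mp (Finset.mem_range.mp hw))

lemma fpoly_reflect {ℓ : ℕ} {K : Matrix (Fin ℓ) (Fin ℓ) (ZMod 2)} (hK : IsUnit K.det)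
    (hsd : SelfDual K) (i : Fin ℓ) (z : ℝ) :
    fpoly K i z = 1 - fpoly K (Fin.rev i) (1 - z) := by
  unfold fpoly
  have hterm : ∀ w ∈ Finset.range (ℓ + 1),
      (Ecount K i w : ℝ) * z ^ w * (1 - z) ^ (ℓ - w)
      = ((Nat.choose ℓ w : ℝ) - (Ecount K (Fin.rev i) (ℓ - w) : ℝ)) * z ^ w
          * (1 - z) ^ (ℓ - w) := by
    intro w hw
    have hwle : w ≤ ℓ := Nat.lt_succ_iff.mp (Finset.mem_range.mp hw)
    have := Ecount_compl hK hsd i hwle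
    have hcast : (Ecount K i w : ℝ) = (Nat.choose ℓ w : ℝ) - (Ecount K (Fin.rev i) (ℓ - w) : ℝ) := by
      have : (Ecount K i w : ℝ) + (Ecount K (Fin.rev i) (ℓ - w) : ℝ) = (Nat.choose ℓ w : ℝ) := by
        exact_mod_cast congrArg (Nat.cast : ℕ → ℝ) this
      linarith
    rw [hcast]
  rw [Finset.sum_congr rfl hterm]
  simp only [sub_mul]
  rw [Finset.sum_sub_distrib, sum_binom]
  congr 1
  rw [show ∑ w ∈ Finset.range (ℓ + 1),
      (Ecount K (Fin.rev i) w : ℝ) * (1 - z) ^ w * (1 - (1 - z)) ^ (ℓ - w)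
      = ∑ w ∈ Finset.range (ℓ + 1),
        (Ecount K (Fin.rev i) w : ℝ) * (1 - z) ^ w * z ^ (ℓ - w) from
    Finset.sum_congr rfl fun w _ => by rw [show (1 : ℝ) - (1 - z) = z from by ring]]
  rw [← Finset.sum_range_reflect
    (fun w => (Ecount K (Fin.rev i) w : ℝ) * (1 - z) ^ w * z ^ (ℓ - w)) (ℓ + 1)]
  apply Finset.sum_congr rfl
  intro w hw
  have hwle : w ≤ ℓ := Nat.lt_succ_iff.mp (Finset.mem_range.mp hw)
  have h1 : ℓ + 1 - 1 - w = ℓ - w := by omega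
  have h2 : ℓ - (ℓ - w) = w := by omega
  rw [h1, h2]
  ring


/-- For a self-dual kernel and a test function `g*` symmetric about `1/2`,
the function `h(z) = (1/ℓ) ∑ᵢ g*(f_i(z))` satisfies `h(z) = h(1-z)` on `[0,1]`. -/
theorem test_function_symmetric {ℓ : ℕ} (hℓ : 0 < ℓ)
    (K : Matrix (Fin ℓ) (Fin ℓ) (ZMod 2)) (hK : IsUnit K.det)
    (hsd : SelfDual K) (gstar : ℝ → ℝ)
    (hgs : ∀ x ∈ Set.Icc (0 : ℝ) 1, gstar x = gstar (1 - x))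
    (z : ℝ) (hz : z ∈ Set.Icc (0 : ℝ) 1) :
    (1 / ℓ : ℝ) * ∑ i : Fin ℓ, gstar (fpoly K i z) =
      (1 / ℓ : ℝ) * ∑ i : Fin ℓ, gstar (fpoly K i (1 - z)) := by
  have key : ∀ i : Fin ℓ, fpoly K i (1 - z) = 1 - fpoly K (Fin.rev i) z := by
    intro i
    have h := fpoly_reflect hK hsd (Fin.rev i) z
    rw [Fin.rev_rev] at h
    linarith
  congr 1
  have h1 : ∑ i : Fin ℓ, gstar (fpoly K i (1 - z))
      = ∑ i : Fin ℓ, gstar (fpoly K (Fin.rev i) z) := by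
    refine Finset.sum_congr rfl fun i _ => ?_
    rw [key i, ← hgs _ (fpoly_mem hK hsd (Fin.rev i) hz)]
  rw [h1]
  exact (Fintype.sum_bijective Fin.rev Fin.rev_involutive.bijective _ _ fun i => rfl).symm
end

section
/- Let ℓ ≥ 2 and let f_1,…,f_ℓ : [0,1] → [0,1] be functions each of which maps (0,1) into (0,1). Let g : [0,1] → [0,∞), define g_0 = g and g_{n+1}(z) = (1/ℓ) ∑_{i=1}^ℓ g_n(f_i(z)), and suppose b ∈ (0,1) satisfies g_1(z) ≤ b·g(z) for all z ∈ (0,1). Fix z ∈ (0,1) and 0 < a ≤ b' < 1 with inf_{y ∈ [a,b']} g(y) > 0. Let Z_n be the process on Ω = (Fin ℓ)^ℕ with the infinite product μ of uniform probability measures defined by Z_0(ω) = z and Z_{n+1}(ω) = f_{ω(n)}(Z_n(ω)). Suppose the scaling assumption holds: there exist μ₀ > 0 and L ∈ (0,∞) such that lim_{n→∞} ℓ^{n/μ₀} · μ({ω : Z_n(ω) ∈ [a,b']}) = L. Then μ₀ ≤ (log ℓ)/(− log b), i.e., μ₀ ≤ −1/log_ℓ b. -/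
open MeasureTheory

/-- The sequence of functions `g_0 = g`, `g_{n+1}(z) = (1/ℓ) ∑ᵢ g_n(f_i(z))`. -/
noncomputable def gseq {ℓ : ℕ} (f : Fin ℓ → ℝ → ℝ) (g : ℝ → ℝ) : ℕ → ℝ → ℝ
  | 0 => g
  | n + 1 => fun z => (1 / ℓ : ℝ) * ∑ i, gseq f g n (f i z)

/-- The random process `Z_0(ω) = z`, `Z_{n+1}(ω) = f_{ω(n)}(Z_n(ω))`. -/
def Zproc {ℓ : ℕ} (f : Fin ℓ → ℝ → ℝ) (z : ℝ) : ℕ → (ℕ → Fin ℓ) → ℝ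
  | 0 => fun _ => z
  | n + 1 => fun ω => f (ω n) (Zproc f z n ω)

/-- `μ` is the infinite product of uniform probability measures on `Fin ℓ`:
it is a probability measure giving each cylinder on the first `n` coordinates
measure `(1/ℓ)^n`. -/
def IsProductOfUniforms {ℓ : ℕ} (μ : Measure (ℕ → Fin ℓ)) : Prop :=
  IsProbabilityMeasure μ ∧
    ∀ (n : ℕ) (y : Fin n → Fin ℓ),
      μ {ω | ∀ k : Fin n, ω (k : ℕ) = y k} = ((ℓ : ENNReal))⁻¹ ^ n


/-- deterministic iteration along a finite word -/
def Ziter {ℓ : ℕ} (f : Fin ℓ → ℝ → ℝ) : (n : ℕ) → ℝ → (Fin n → Fin ℓ) → ℝ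
  | 0, z, _ => z
  | n + 1, z, y => Ziter f n (f (y 0) z) (y ∘ Fin.succ)

lemma Zproc_shift {ℓ : ℕ} (f : Fin ℓ → ℝ → ℝ) :
    ∀ (n : ℕ) (z : ℝ) (ω : ℕ → Fin ℓ),
      Zproc f z (n + 1) ω = Zproc f (f (ω 0) z) n (fun k => ω (k + 1)) := by
  intro n
  induction n with
  | zero => intro z ω; rfl
  | succ n ih =>
      intro z ω
      show f (ω (n+1)) (Zproc f z (n+1) ω) = _
      rw [ih z ω]
      rfl

lemma Zproc_eq_Ziter {ℓ : ℕ} (f : Fin ℓ → ℝ → ℝ) :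
    ∀ (n : ℕ) (z : ℝ) (ω : ℕ → Fin ℓ),
      Zproc f z n ω = Ziter f n z (fun k : Fin n => ω (k : ℕ)) := by
  intro n
  induction n with
  | zero => intro z ω; rfl
  | succ n ih =>
      intro z ω
      rw [Zproc_shift, ih]
      show _ = Ziter f n (f ((fun k : Fin (n+1) => ω (k:ℕ)) 0) z)
          ((fun k : Fin (n+1) => ω (k:ℕ)) ∘ Fin.succ)
      congr 1

lemma Ziter_mem_Ioo {ℓ : ℕ} (f : Fin ℓ → ℝ → ℝ)
    (hf' : ∀ i, Set.MapsTo (f i) (Set.Ioo (0 : ℝ) 1) (Set.Ioo (0 : ℝ) 1)) :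
    ∀ (n : ℕ) (z : ℝ), z ∈ Set.Ioo (0 : ℝ) 1 → ∀ y : Fin n → Fin ℓ,
      Ziter f n z y ∈ Set.Ioo (0 : ℝ) 1 := by
  intro n
  induction n with
  | zero => intro z hz y; exact hz
  | succ n ih => intro z hz y; exact ih _ (hf' _ hz) _

lemma gseq_eq_sum {ℓ : ℕ} (f : Fin ℓ → ℝ → ℝ) (g : ℝ → ℝ) :
    ∀ (n : ℕ) (z : ℝ),
      gseq f g n z = (1 / ℓ : ℝ) ^ n * ∑ y : Fin n → Fin ℓ, g (Ziter f n z y) := by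
  intro n
  induction n with
  | zero =>
      intro z
      simp [gseq, Ziter]
  | succ n ih =>
      intro z
      show (1 / ℓ : ℝ) * ∑ i, gseq f g n (f i z) = _
      have h1 : ∑ y : Fin (n+1) → Fin ℓ, g (Ziter f (n+1) z y)
          = ∑ p : Fin ℓ × (Fin n → Fin ℓ), g (Ziter f (n+1) z (Fin.cons p.1 p.2)) := by
        refine (Fintype.sum_equiv (Fin.consEquiv (fun _ => Fin ℓ)) _ _ ?_).symm
        intro p
        rfl
      have h2 : ∀ (i : Fin ℓ) (y : Fin n → Fin ℓ),
          Ziter f (n+1) z (Fin.cons i y) = Ziter f n (f i z) y := by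
        intro i y
        show Ziter f n (f ((Fin.cons i y : Fin (n+1) → Fin ℓ) 0) z)
            ((Fin.cons i y : Fin (n+1) → Fin ℓ) ∘ Fin.succ) = _
        congr 1
      rw [h1, Fintype.sum_prod_type]
      simp_rw [h2, ih]
      rw [Finset.mul_sum, Finset.mul_sum]
      apply Finset.sum_congr rfl
      intro i _
      ring

lemma gseq_le_pow {ℓ : ℕ} (f : Fin ℓ → ℝ → ℝ)
    (hf' : ∀ i, Set.MapsTo (f i) (Set.Ioo (0 : ℝ) 1) (Set.Ioo (0 : ℝ) 1))
    (g : ℝ → ℝ) (b : ℝ) (hb : 0 < b)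
    (hbg : ∀ z ∈ Set.Ioo (0 : ℝ) 1, gseq f g 1 z ≤ b * g z) :
    ∀ n, ∀ z ∈ Set.Ioo (0 : ℝ) 1, gseq f g n z ≤ b ^ n * g z := by
  intro n
  induction n with
  | zero => intro z hz; simp [gseq]
  | succ n ih =>
      intro z hz
      have h1 : ∑ i, gseq f g n (f i z) ≤ ∑ i, b ^ n * g (f i z) :=
        Finset.sum_le_sum fun i _ => ih _ (hf' i hz)
      have hg1 : gseq f g 1 z = (1 / ℓ : ℝ) * ∑ i, g (f i z) := rfl
      calc (1 / ℓ : ℝ) * ∑ i, gseq f g n (f i z)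
          ≤ (1 / ℓ : ℝ) * ∑ i, b ^ n * g (f i z) :=
            mul_le_mul_of_nonneg_left h1 (by positivity)
        _ = b ^ n * ((1 / ℓ : ℝ) * ∑ i, g (f i z)) := by
            rw [← Finset.mul_sum]; ring
        _ = b ^ n * gseq f g 1 z := by rw [hg1]
        _ ≤ b ^ n * (b * g z) :=
            mul_le_mul_of_nonneg_left (hbg z hz) (pow_nonneg hb.le n)
        _ = b ^ (n + 1) * g z := by ring

lemma measure_Zset {ℓ : ℕ} (f : Fin ℓ → ℝ → ℝ) (z : ℝ)
    (μ : Measure (ℕ → Fin ℓ)) (hμ : IsProductOfUniforms μ) (n : ℕ) (a b' : ℝ) :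
    μ {ω | Zproc f z n ω ∈ Set.Icc a b'}
      = ((Finset.univ.filter
          (fun y : Fin n → Fin ℓ => Ziter f n z y ∈ Set.Icc a b')).card : ENNReal)
        * ((ℓ : ENNReal))⁻¹ ^ n := by
  set S := Finset.univ.filter
      (fun y : Fin n → Fin ℓ => Ziter f n z y ∈ Set.Icc a b') with hS
  have hset : {ω | Zproc f z n ω ∈ Set.Icc a b'}
      = ⋃ y ∈ S, {ω : ℕ → Fin ℓ | ∀ k : Fin n, ω (k : ℕ) = y k} := by
    ext ω
    simp only [Set.mem_setOf_eq, Set.mem_iUnion, hS, Finset.mem_filter,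
      Finset.mem_univ, true_and, Zproc_eq_Ziter]
    constructor
    · intro h; exact ⟨fun k => ω k, h, fun k => rfl⟩
    · rintro ⟨y, hy, hk⟩
      have hyeq : (fun k : Fin n => ω (k : ℕ)) = y := funext hk
      rw [hyeq]; exact hy
  rw [hset, measure_biUnion_finset]
  · simp only [hμ.2 n, Finset.sum_const, nsmul_eq_mul]
  · intro y _ y' _ hne
    rw [Function.onFun, Set.disjoint_left]
    intro ω h1 h2
    exact hne (funext fun k => (h1 k).symm.trans (h2 k))
  · intro y _
    have : {ω : ℕ → Fin ℓ | ∀ k : Fin n, ω (k : ℕ) = y k}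
        = ⋂ k : Fin n, (fun ω : ℕ → Fin ℓ => ω (k : ℕ)) ⁻¹' {y k} := by
      ext ω; simp
    rw [this]
    exact MeasurableSet.iInter fun k =>
      (measurable_pi_apply _) (measurableSet_singleton _)

/-- Under the scaling assumption, the scaling exponent `μ₀` satisfies
`μ₀ ≤ -1/log_ℓ b = log ℓ / (-log b)`. -/
theorem scaling_exponent_bound {ℓ : ℕ} (hℓ : 2 ≤ ℓ) (f : Fin ℓ → ℝ → ℝ)
    (hf : ∀ i, Set.MapsTo (f i) (Set.Icc (0 : ℝ) 1) (Set.Icc (0 : ℝ) 1))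
    (hf' : ∀ i, Set.MapsTo (f i) (Set.Ioo (0 : ℝ) 1) (Set.Ioo (0 : ℝ) 1))
    (g : ℝ → ℝ) (hg0 : ∀ y ∈ Set.Icc (0 : ℝ) 1, 0 ≤ g y)
    (b : ℝ) (hb : 0 < b) (hb1 : b < 1)
    (hbg : ∀ z ∈ Set.Ioo (0 : ℝ) 1, gseq f g 1 z ≤ b * g z)
    (z : ℝ) (hz : z ∈ Set.Ioo (0 : ℝ) 1)
    (a b' : ℝ) (ha : 0 < a) (hab : a ≤ b') (hb' : b' < 1)
    (hm : 0 < sInf (g '' Set.Icc a b'))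
    (μ : Measure (ℕ → Fin ℓ)) (hμ : IsProductOfUniforms μ)
    (μ₀ : ℝ) (hμ₀ : 0 < μ₀) (L : ℝ) (hL : 0 < L)
    (hscaling : Filter.Tendsto
      (fun n : ℕ => (ℓ : ℝ) ^ ((n : ℝ) / μ₀) *
        (μ {ω | Zproc f z n ω ∈ Set.Icc a b'}).toReal)
      Filter.atTop (nhds L)) :
    μ₀ ≤ Real.log ℓ / (-Real.log b) := by
  set m := sInf (g '' Set.Icc a b') with hmdef
  have hℓ0 : (0 : ℝ) < ℓ := by
    have : (0 : ℕ) < ℓ := lt_of_lt_of_le (by norm_num) hℓ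
    exact_mod_cast this
  have hℓ1 : (1 : ℝ) < ℓ := by
    have : (1 : ℕ) < ℓ := lt_of_lt_of_le (by norm_num) hℓ
    exact_mod_cast this
  have hIccsub : Set.Icc a b' ⊆ Set.Icc (0 : ℝ) 1 :=
    Set.Icc_subset_Icc ha.le hb'.le
  have hbdd : BddBelow (g '' Set.Icc a b') := by
    refine ⟨0, ?_⟩
    rintro x ⟨y, hy, rfl⟩
    exact hg0 y (hIccsub hy)
  have hgz : 0 ≤ g z := hg0 z (Set.Ioo_subset_Icc_self hz)
  -- key bound on measures
  have key : ∀ n : ℕ, (μ {ω | Zproc f z n ω ∈ Set.Icc a b'}).toReal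
      ≤ g z / m * b ^ n := by
    intro n
    set S := Finset.univ.filter
        (fun y : Fin n → Fin ℓ => Ziter f n z y ∈ Set.Icc a b') with hS
    have htoReal : (μ {ω | Zproc f z n ω ∈ Set.Icc a b'}).toReal
        = (S.card : ℝ) * ((ℓ : ℝ)⁻¹) ^ n := by
      rw [measure_Zset f z μ hμ n a b']
      rw [ENNReal.toReal_mul, ENNReal.toReal_pow, ENNReal.toReal_inv]
      simp only [ENNReal.toReal_natCast, hS]
    have hsum : m * ((S.card : ℝ) * ((ℓ : ℝ)⁻¹) ^ n) ≤ gseq f g n z := by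
      rw [gseq_eq_sum]
      have h1 : ∑ y ∈ S, g (Ziter f n z y)
          ≤ ∑ y : Fin n → Fin ℓ, g (Ziter f n z y) :=
        Finset.sum_le_sum_of_subset_of_nonneg (Finset.subset_univ S)
          (fun y _ _ => hg0 _ (Set.Ioo_subset_Icc_self
            (Ziter_mem_Ioo f hf' n z hz y)))
      have h2 : ∑ y ∈ S, m ≤ ∑ y ∈ S, g (Ziter f n z y) :=
        Finset.sum_le_sum fun y hy =>
          csInf_le hbdd ⟨_, (Finset.mem_filter.mp hy).2, rfl⟩
      have h3 : (S.card : ℝ) * m ≤ ∑ y : Fin n → Fin ℓ, g (Ziter f n z y) := by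
        have := le_trans h2 h1
        rwa [Finset.sum_const, nsmul_eq_mul] at this
      have hpnn : (0 : ℝ) ≤ (1 / ℓ : ℝ) ^ n := by positivity
      calc m * ((S.card : ℝ) * ((ℓ : ℝ)⁻¹) ^ n)
          = (1 / ℓ : ℝ) ^ n * ((S.card : ℝ) * m) := by
            rw [one_div]; ring
        _ ≤ (1 / ℓ : ℝ) ^ n * ∑ y : Fin n → Fin ℓ, g (Ziter f n z y) :=
            mul_le_mul_of_nonneg_left h3 hpnn
    have hgb : gseq f g n z ≤ b ^ n * g z :=
      gseq_le_pow f hf' g b hb hbg n z hz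
    have hcomb : m * ((S.card : ℝ) * ((ℓ : ℝ)⁻¹) ^ n) ≤ b ^ n * g z :=
      hsum.trans hgb
    rw [htoReal]
    rw [div_mul_eq_mul_div, le_div_iff₀ hm]
    calc (S.card : ℝ) * ((ℓ : ℝ)⁻¹) ^ n * m
        = m * ((S.card : ℝ) * ((ℓ : ℝ)⁻¹) ^ n) := by ring
      _ ≤ b ^ n * g z := hcomb
      _ = g z * b ^ n := by ring
  -- final analysis
  by_contra hcon
  push_neg at hcon
  have hlogℓ : 0 < Real.log ℓ := Real.log_pos hℓ1
  have hlogb : Real.log b < 0 := Real.log_neg hb hb1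
  set r := (ℓ : ℝ) ^ ((1 : ℝ) / μ₀) * b with hrdef
  have hrppos : (0 : ℝ) < (ℓ : ℝ) ^ ((1 : ℝ) / μ₀) := Real.rpow_pos_of_pos hℓ0 _
  have hrpos : 0 < r := mul_pos hrppos hb
  have hr1 : r < 1 := by
    rw [← Real.log_neg_iff hrpos, hrdef,
      Real.log_mul (ne_of_gt hrppos) hb.ne', Real.log_rpow hℓ0]
    have h4 : Real.log ℓ < μ₀ * (-Real.log b) := by
      rw [div_lt_iff₀ (by linarith : (0:ℝ) < -Real.log b)] at hcon
      linarith
    have h5 : (1 / μ₀) * Real.log ℓ < -Real.log b := by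
      rw [div_mul_eq_mul_div, div_lt_iff₀ hμ₀]
      linarith [mul_comm μ₀ (-Real.log b)]
    linarith
  have hbound : ∀ n : ℕ, (ℓ : ℝ) ^ ((n : ℝ) / μ₀) *
      (μ {ω | Zproc f z n ω ∈ Set.Icc a b'}).toReal ≤ g z / m * r ^ n := by
    intro n
    have hpow : (ℓ : ℝ) ^ ((n : ℝ) / μ₀) = ((ℓ : ℝ) ^ ((1 : ℝ) / μ₀)) ^ n := by
      rw [← Real.rpow_natCast ((ℓ : ℝ) ^ ((1 : ℝ) / μ₀)) n,
        ← Real.rpow_mul hℓ0.le]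
      congr 1
      ring
    rw [hpow]
    calc ((ℓ : ℝ) ^ ((1 : ℝ) / μ₀)) ^ n *
          (μ {ω | Zproc f z n ω ∈ Set.Icc a b'}).toReal
        ≤ ((ℓ : ℝ) ^ ((1 : ℝ) / μ₀)) ^ n * (g z / m * b ^ n) :=
          mul_le_mul_of_nonneg_left (key n) (pow_nonneg hrppos.le n)
      _ = g z / m * r ^ n := by rw [hrdef, mul_pow]; ring
  have h0 : Filter.Tendsto (fun n : ℕ => g z / m * r ^ n)
      Filter.atTop (nhds 0) := by
    have h := tendsto_pow_atTop_nhds_zero_of_lt_one hrpos.le hr1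
    have := h.const_mul (g z / m)
    simpa using this
  have hL0 : L ≤ 0 :=
    le_of_tendsto_of_tendsto' hscaling h0 hbound
  linarith
end
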